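/- Let λ : A → B be a surjective map and ρ ⊆ A^m a generalized quasiorder with λ⁻¹(λ(ρ)) = ρ. Then λ(ρ) = {(λa₁,…,λa_m) : (a₁,…,a_m) ∈ ρ} is a generalized quasiorder on B. -/
import Mathlib


/-- An m-ary relation is generalized transitive if whenever every row and every
column of an m×m matrix belongs to it, so does the diagonal. -/
def IsGenTransitive {A : Type*} {m : ℕ} (ρ : Set (Fin m → A)) : Prop :=
  ∀ M : Fin m → Fin m → A,
    (∀ i, (fun j => M i j) ∈ ρ) → (∀ j, (fun i => M i j) ∈ ρ) →
    (fun i => M i i) ∈ ρ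

/-- A generalized quasiorder: reflexive and generalized transitive. -/
def IsGQuord {A : Type*} {m : ℕ} (ρ : Set (Fin m → A)) : Prop :=
  (∀ a : A, (fun _ => a) ∈ ρ) ∧ IsGenTransitive ρ

theorem image_gQuord {A B : Type*} {m : ℕ} (lam : A → B)
    (hsurj : Function.Surjective lam) (ρ : Set (Fin m → A)) (h : IsGQuord ρ)
    (hfull : {a : Fin m → A | lam ∘ a ∈ {b : Fin m → B | ∃ a' ∈ ρ, b = lam ∘ a'}} = ρ) :
    IsGQuord {b : Fin m → B | ∃ a ∈ ρ, b = lam ∘ a} := by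
  constructor
  · intro b
    obtain ⟨a, ha⟩ := hsurj b
    exact ⟨fun _ => a, h.1 a, by funext i; simp [ha]⟩
  · intro N hrow hcol
    choose M hM using fun i j => hsurj (N i j)
    have key : ∀ a : Fin m → A, (lam ∘ a) ∈ {b : Fin m → B | ∃ a' ∈ ρ, b = lam ∘ a'} → a ∈ ρ := by
      intro a ha
      rw [← hfull]; exact ha
    have hrowM : ∀ i, (fun j => M i j) ∈ ρ := by
      intro i
      apply key
      have : lam ∘ (fun j => M i j) = fun j => N i j := by funext j; simp [hM]
      rw [this]; exact hrow i
    have hcolM : ∀ j, (fun i => M i j) ∈ ρ := by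
      intro j
      apply key
      have : lam ∘ (fun i => M i j) = fun i => N i j := by funext i; simp [hM]
      rw [this]; exact hcol j
    exact ⟨fun i => M i i, h.2 M hrowM hcolM, by funext i; simp [hM]⟩
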